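/- arXiv:2103.11289 — 2 statements merged into one kernel-verified Lean document; each statement's English description precedes it below -/
import Mathlib

section
/- Fix constants l₁ > 0 and l > 0, and let u : ℝ² × [0,∞) → ℝ be a smooth positive solution of the quasi-spherical equation ∂u/∂t = (l₁+t)·u²·( (l₁+t)⁻² ∂²u/∂θ₁² + l⁻² ∂²u/∂θ₂² ) that is 2π-periodic in the first two variables. Define M(t) = sup over (θ₁,θ₂) ∈ ℝ² of u(θ₁,θ₂,t) and m(t) = inf over (θ₁,θ₂) ∈ ℝ² of u(θ₁,θ₂,t). Then M is monotone non-increasing in t and m is monotone non-decreasing in t. -/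
open Real Set

/-- `u : ℝ → ℝ → ℝ → ℝ` (arguments `θ₁ θ₂ t`) is smooth on `ℝ² × [0,∞)`. -/
def SmoothOnHalf (u : ℝ → ℝ → ℝ → ℝ) : Prop :=
  ContDiffOn ℝ (⊤ : ℕ∞) (fun p : ℝ × ℝ × ℝ => u p.1 p.2.1 p.2.2)
    {p : ℝ × ℝ × ℝ | 0 ≤ p.2.2}

/-- `u` is `2π`-periodic in its first two variables. -/
def Periodic2 (u : ℝ → ℝ → ℝ → ℝ) : Prop :=
  ∀ θ₁ θ₂ t : ℝ, u (θ₁ + 2 * π) θ₂ t = u θ₁ θ₂ t ∧ u θ₁ (θ₂ + 2 * π) t = u θ₁ θ₂ t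

/-- `u` satisfies the quasi-spherical equation
`∂u/∂t = (l₁+t)·u²·((l₁+t)⁻² ∂²u/∂θ₁² + l⁻² ∂²u/∂θ₂²)` at every point of `ℝ² × [0,∞)`,
where the `t`-derivative is taken within `[0,∞)`. -/
def QuasiSphericalSol (l₁ l : ℝ) (u : ℝ → ℝ → ℝ → ℝ) : Prop :=
  ∀ θ₁ θ₂ t : ℝ, 0 ≤ t →
    derivWithin (fun s => u θ₁ θ₂ s) (Ici (0 : ℝ)) t =
      (l₁ + t) * (u θ₁ θ₂ t) ^ 2 *
        (((l₁ + t) ^ 2)⁻¹ * deriv (deriv fun a => u a θ₂ t) θ₁ +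
          (l ^ 2)⁻¹ * deriv (deriv fun b => u θ₁ b t) θ₂)

/-- Second derivative test at a global maximum. -/
lemma sdt_max {g : ℝ → ℝ} (hg : ContDiff ℝ (⊤ : ℕ∞) g) {x : ℝ}
    (hx : ∀ y, g y ≤ g x) : deriv (deriv g) x ≤ 0 := by
  by_contra h
  push_neg at h
  have hloc : IsLocalMax g x := Filter.Eventually.of_forall hx
  have h1 : deriv g x = 0 := hloc.deriv_eq_zero
  have hg' : ContDiff ℝ (⊤ : ℕ∞) (deriv g) := (contDiff_infty_iff_deriv.mp hg).2
  have hd2 : HasDerivAt (deriv g) (deriv (deriv g) x) x :=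
    ((hg'.differentiable (by simp)) x).hasDerivAt
  have hslope := hasDerivAt_iff_tendsto_slope.mp hd2
  have hev : ∀ᶠ y in nhdsWithin x {x}ᶜ, 0 < slope (deriv g) x y :=
    hslope.eventually (eventually_gt_nhds h)
  have hsubset : Ioi x ⊆ ({x}ᶜ : Set ℝ) := fun y hy => ne_of_gt hy
  have hev2 : ∀ᶠ y in nhdsWithin x (Ioi x), 0 < slope (deriv g) x y :=
    nhdsWithin_mono x hsubset hev
  have hev' : ∀ᶠ y in nhdsWithin x (Ioi x), 0 < deriv g y := by
    filter_upwards [hev2, eventually_mem_nhdsWithin] with y hy hy'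
    have hyx : 0 < y - x := sub_pos.mpr hy'
    have hsl : 0 < (deriv g y - deriv g x) / (y - x) := by
      simpa [slope_def_field] using hy
    rcases div_pos_iff.mp hsl with ⟨ha, _⟩ | ⟨_, hb⟩
    · linarith
    · linarith
  obtain ⟨b, hb, hsub⟩ := mem_nhdsGT_iff_exists_Ioc_subset.mp hev'
  have hmono : StrictMonoOn g (Icc x b) := by
    apply strictMonoOn_of_deriv_pos (convex_Icc x b) hg.continuous.continuousOn
    intro y hy
    rw [interior_Icc] at hy
    exact hsub ⟨hy.1, le_of_lt hy.2⟩
  have : g x < g b :=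
    hmono (left_mem_Icc.mpr (le_of_lt hb)) (right_mem_Icc.mpr (le_of_lt hb)) hb
  exact absurd (hx b) (not_le.mpr this)

/-- Second derivative test at a global minimum. -/
lemma sdt_min {g : ℝ → ℝ} (hg : ContDiff ℝ (⊤ : ℕ∞) g) {x : ℝ}
    (hx : ∀ y, g x ≤ g y) : 0 ≤ deriv (deriv g) x := by
  have h := sdt_max (g := fun y => -g y) hg.neg (x := x) (fun y => neg_le_neg (hx y))
  have e1 : (deriv fun y => -g y) = fun y => -deriv g y := funext fun y => deriv.neg
  rw [e1, show deriv (fun y => -deriv g y) x = -deriv (deriv g) x from deriv.neg] at h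
  linarith

/-- One-sided Fermat: max at right endpoint forces nonneg derivative. -/
lemma right_max_deriv_nonneg {f : ℝ → ℝ} {c a x : ℝ} (hax : a < x)
    (hd : HasDerivAt f c x) (hmax : ∀ s, a ≤ s → s ≤ x → f s ≤ f x) : 0 ≤ c := by
  have hloc : IsLocalMaxOn f (Iic x) x := by
    have h1 : Ioi a ∈ nhdsWithin x (Iic x) := nhdsWithin_le_nhds (Ioi_mem_nhds hax)
    filter_upwards [h1, eventually_mem_nhdsWithin] with y hy hy'
    exact hmax y (le_of_lt hy) hy'
  have hcone : (-1 : ℝ) ∈ posTangentConeAt (Iic x) x := by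
    apply mem_posTangentConeAt_of_segment_subset
    rw [segment_symm, show x + (-1) = x - 1 by ring,
      segment_eq_Icc (by linarith : x - 1 ≤ x)]
    exact Icc_subset_Iic_self
  have h := hloc.hasFDerivWithinAt_nonpos hd.hasFDerivAt.hasFDerivWithinAt hcone
  simp [ContinuousLinearMap.smulRight_apply] at h
  linarith

/-- One-sided Fermat: min at right endpoint forces nonpos derivative. -/
lemma right_min_deriv_nonpos {f : ℝ → ℝ} {c a x : ℝ} (hax : a < x)
    (hd : HasDerivAt f c x) (hmin : ∀ s, a ≤ s → s ≤ x → f x ≤ f s) : c ≤ 0 := by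
  have h := right_max_deriv_nonneg (f := fun y => -f y) (c := -c) hax hd.neg
    (fun s hs hs' => neg_le_neg (hmin s hs hs'))
  linarith

lemma slice1 {u : ℝ → ℝ → ℝ → ℝ} (hs : SmoothOnHalf u) (θ₂ t : ℝ) (ht : 0 < t) :
    ContDiff ℝ (⊤ : ℕ∞) (fun a => u a θ₂ t) := by
  rw [contDiff_iff_contDiffAt]
  intro a
  have hmem : {p : ℝ × ℝ × ℝ | 0 ≤ p.2.2} ∈ nhds ((a, θ₂, t) : ℝ × ℝ × ℝ) :=
    mem_nhds_iff.mpr ⟨{p : ℝ × ℝ × ℝ | 0 < p.2.2}, fun p hp => show (0:ℝ) ≤ p.2.2 from le_of_lt hp,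
      isOpen_lt continuous_const (continuous_snd.comp continuous_snd), ht⟩
  have h1 : ContDiffAt ℝ (⊤ : ℕ∞) (fun p : ℝ × ℝ × ℝ => u p.1 p.2.1 p.2.2) (a, θ₂, t) :=
    hs.contDiffAt hmem
  have h2 : ContDiffAt ℝ (⊤ : ℕ∞) (fun a : ℝ => ((a, θ₂, t) : ℝ × ℝ × ℝ)) a :=
    (contDiff_id.prodMk contDiff_const).contDiffAt
  exact h1.comp a h2

lemma slice2 {u : ℝ → ℝ → ℝ → ℝ} (hs : SmoothOnHalf u) (θ₁ t : ℝ) (ht : 0 < t) :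
    ContDiff ℝ (⊤ : ℕ∞) (fun b => u θ₁ b t) := by
  rw [contDiff_iff_contDiffAt]
  intro b
  have hmem : {p : ℝ × ℝ × ℝ | 0 ≤ p.2.2} ∈ nhds ((θ₁, b, t) : ℝ × ℝ × ℝ) :=
    mem_nhds_iff.mpr ⟨{p : ℝ × ℝ × ℝ | 0 < p.2.2}, fun p hp => show (0:ℝ) ≤ p.2.2 from le_of_lt hp,
      isOpen_lt continuous_const (continuous_snd.comp continuous_snd), ht⟩
  have h1 : ContDiffAt ℝ (⊤ : ℕ∞) (fun p : ℝ × ℝ × ℝ => u p.1 p.2.1 p.2.2) (θ₁, b, t) :=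
    hs.contDiffAt hmem
  have h2 : ContDiffAt ℝ (⊤ : ℕ∞) (fun b : ℝ => ((θ₁, b, t) : ℝ × ℝ × ℝ)) b :=
    (contDiff_const.prodMk (contDiff_id.prodMk contDiff_const)).contDiffAt
  exact h1.comp b h2

lemma slice3 {u : ℝ → ℝ → ℝ → ℝ} (hs : SmoothOnHalf u) (θ₁ θ₂ t : ℝ) (ht : 0 < t) :
    DifferentiableAt ℝ (fun s => u θ₁ θ₂ s) t := by
  have hmem : {p : ℝ × ℝ × ℝ | 0 ≤ p.2.2} ∈ nhds ((θ₁, θ₂, t) : ℝ × ℝ × ℝ) :=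
    mem_nhds_iff.mpr ⟨{p : ℝ × ℝ × ℝ | 0 < p.2.2}, fun p hp => show (0:ℝ) ≤ p.2.2 from le_of_lt hp,
      isOpen_lt continuous_const (continuous_snd.comp continuous_snd), ht⟩
  have h1 : ContDiffAt ℝ (⊤ : ℕ∞) (fun p : ℝ × ℝ × ℝ => u p.1 p.2.1 p.2.2) (θ₁, θ₂, t) :=
    hs.contDiffAt hmem
  have h2 : ContDiffAt ℝ (⊤ : ℕ∞) (fun s : ℝ => ((θ₁, θ₂, s) : ℝ × ℝ × ℝ)) t :=
    (contDiff_const.prodMk (contDiff_const.prodMk contDiff_id)).contDiffAt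
  exact (h1.comp t h2).differentiableAt (by simp)

lemma reduce_per {u : ℝ → ℝ → ℝ → ℝ} (hper : Periodic2 u) (x y t : ℝ) :
    ∃ a ∈ Icc (0:ℝ) (2*π), ∃ b ∈ Icc (0:ℝ) (2*π), u x y t = u a b t := by
  have p1 : Function.Periodic (fun a => u a y t) (2*π) := fun a => (hper a y t).1
  obtain ⟨a, ha, hxa⟩ := p1.exists_mem_Ico₀ Real.two_pi_pos x
  have p2 : Function.Periodic (fun b => u a b t) (2*π) := fun b => (hper a b t).2
  obtain ⟨b, hb, hyb⟩ := p2.exists_mem_Ico₀ Real.two_pi_pos y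
  exact ⟨a, Ico_subset_Icc_self ha, b, Ico_subset_Icc_self hb, hxa.trans hyb⟩

lemma core_max {l₁ l : ℝ} (hl₁ : 0 < l₁) (hl : 0 < l) {u : ℝ → ℝ → ℝ → ℝ}
    (hsmooth : SmoothOnHalf u) (hpos : ∀ θ₁ θ₂ t : ℝ, 0 ≤ t → 0 < u θ₁ θ₂ t)
    (hper : Periodic2 u) (hsol : QuasiSphericalSol l₁ l u)
    {t₀ t₁ ε : ℝ} (ht₀ : 0 ≤ t₀) (h01 : t₀ ≤ t₁) (hε : 0 < ε) :
    ∃ q₁ q₂ : ℝ, q₁ ∈ Icc (0:ℝ) (2*π) ∧ q₂ ∈ Icc (0:ℝ) (2*π) ∧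
      ∀ x y : ℝ, u x y t₁ - ε * t₁ ≤ u q₁ q₂ t₀ - ε * t₀ := by
  set K : Set (ℝ × ℝ × ℝ) := Icc (0:ℝ) (2*π) ×ˢ (Icc (0:ℝ) (2*π) ×ˢ Icc t₀ t₁) with hK
  have hKc : IsCompact K := isCompact_Icc.prod (isCompact_Icc.prod isCompact_Icc)
  have hKne : K.Nonempty :=
    ⟨(0, 0, t₀), ⟨le_refl 0, by positivity⟩, ⟨le_refl 0, by positivity⟩, le_refl t₀, h01⟩
  have hKsub : K ⊆ {p : ℝ × ℝ × ℝ | 0 ≤ p.2.2} := fun p hp => le_trans ht₀ hp.2.2.1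
  have hφc : ContinuousOn (fun p : ℝ × ℝ × ℝ => u p.1 p.2.1 p.2.2 - ε * p.2.2) K :=
    (hsmooth.continuousOn.mono hKsub).sub
      ((continuous_const.mul (continuous_snd.comp continuous_snd)).continuousOn)
  obtain ⟨⟨q₁, q₂, ts⟩, hqK, hqmax⟩ := hKc.exists_isMaxOn hKne hφc
  obtain ⟨hq₁, hq₂, hts⟩ := hqK
  have hmax : ∀ p ∈ K, u p.1 p.2.1 p.2.2 - ε * p.2.2 ≤ u q₁ q₂ ts - ε * ts :=
    fun p hp => hqmax hp
  have hts0 : ts = t₀ := by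
    by_contra hne
    have hlt : t₀ < ts := lt_of_le_of_ne hts.1 (Ne.symm hne)
    have htsp : 0 < ts := lt_of_le_of_lt ht₀ hlt
    have hmax1 : ∀ a, u a q₂ ts ≤ u q₁ q₂ ts := by
      intro a
      have pp : Function.Periodic (fun a => u a q₂ ts) (2*π) := fun a => (hper a q₂ ts).1
      obtain ⟨y, hy, hxy⟩ := pp.exists_mem_Ico₀ Real.two_pi_pos a
      have hxy' : u a q₂ ts = u y q₂ ts := hxy
      have h := hmax (y, q₂, ts) ⟨Ico_subset_Icc_self hy, hq₂, hts⟩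
      rw [hxy']; linarith
    have hmax2 : ∀ b, u q₁ b ts ≤ u q₁ q₂ ts := by
      intro b
      have pp : Function.Periodic (fun b => u q₁ b ts) (2*π) := fun b => (hper q₁ b ts).2
      obtain ⟨y, hy, hxy⟩ := pp.exists_mem_Ico₀ Real.two_pi_pos b
      have hxy' : u q₁ b ts = u q₁ y ts := hxy
      have h := hmax (q₁, y, ts) ⟨hq₁, Ico_subset_Icc_self hy, hts⟩
      rw [hxy']; linarith
    have hd1 : deriv (deriv fun a => u a q₂ ts) q₁ ≤ 0 :=
      sdt_max (slice1 hsmooth q₂ ts htsp) hmax1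
    have hd2 : deriv (deriv fun b => u q₁ b ts) q₂ ≤ 0 :=
      sdt_max (slice2 hsmooth q₁ ts htsp) hmax2
    have hdiff := slice3 hsmooth q₁ q₂ ts htsp
    have hderiv_eq : derivWithin (fun s => u q₁ q₂ s) (Ici (0:ℝ)) ts
        = deriv (fun s => u q₁ q₂ s) ts := derivWithin_of_mem_nhds (Ici_mem_nhds htsp)
    have hle : deriv (fun s => u q₁ q₂ s) ts ≤ 0 := by
      rw [← hderiv_eq, hsol q₁ q₂ ts (le_of_lt htsp)]
      have hA : (0:ℝ) ≤ (l₁ + ts) * (u q₁ q₂ ts) ^ 2 :=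
        mul_nonneg (by linarith) (sq_nonneg _)
      apply mul_nonpos_of_nonneg_of_nonpos hA
      have c1 : (0:ℝ) ≤ ((l₁ + ts) ^ 2)⁻¹ := inv_nonneg.mpr (sq_nonneg _)
      have c2 : (0:ℝ) ≤ ((l : ℝ) ^ 2)⁻¹ := inv_nonneg.mpr (sq_nonneg _)
      exact add_nonpos (mul_nonpos_of_nonneg_of_nonpos c1 hd1)
        (mul_nonpos_of_nonneg_of_nonpos c2 hd2)
    have hf : HasDerivAt (fun s => u q₁ q₂ s - ε * s)
        (deriv (fun s => u q₁ q₂ s) ts - ε) ts := by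
      have h1 := hdiff.hasDerivAt
      have h2 : HasDerivAt (fun s : ℝ => ε * s) ε ts := by
        simpa using (hasDerivAt_id ts).const_mul ε
      exact h1.sub h2
    have h0 : 0 ≤ deriv (fun s => u q₁ q₂ s) ts - ε := by
      apply right_max_deriv_nonneg hlt hf
      intro s hs1 hs2
      exact hmax (q₁, q₂, s) ⟨hq₁, hq₂, hs1, le_trans hs2 hts.2⟩
    linarith
  subst hts0
  refine ⟨q₁, q₂, hq₁, hq₂, ?_⟩
  intro x y
  obtain ⟨a, ha, b, hb, hxy⟩ := reduce_per hper x y t₁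
  rw [hxy]
  exact hmax (a, b, t₁) ⟨ha, hb, h01, le_refl t₁⟩

lemma core_min {l₁ l : ℝ} (hl₁ : 0 < l₁) (hl : 0 < l) {u : ℝ → ℝ → ℝ → ℝ}
    (hsmooth : SmoothOnHalf u) (hpos : ∀ θ₁ θ₂ t : ℝ, 0 ≤ t → 0 < u θ₁ θ₂ t)
    (hper : Periodic2 u) (hsol : QuasiSphericalSol l₁ l u)
    {t₀ t₁ ε : ℝ} (ht₀ : 0 ≤ t₀) (h01 : t₀ ≤ t₁) (hε : 0 < ε) :
    ∃ q₁ q₂ : ℝ, q₁ ∈ Icc (0:ℝ) (2*π) ∧ q₂ ∈ Icc (0:ℝ) (2*π) ∧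
      ∀ x y : ℝ, u q₁ q₂ t₀ + ε * t₀ ≤ u x y t₁ + ε * t₁ := by
  set K : Set (ℝ × ℝ × ℝ) := Icc (0:ℝ) (2*π) ×ˢ (Icc (0:ℝ) (2*π) ×ˢ Icc t₀ t₁) with hK
  have hKc : IsCompact K := isCompact_Icc.prod (isCompact_Icc.prod isCompact_Icc)
  have hKne : K.Nonempty :=
    ⟨(0, 0, t₀), ⟨le_refl 0, by positivity⟩, ⟨le_refl 0, by positivity⟩, le_refl t₀, h01⟩
  have hKsub : K ⊆ {p : ℝ × ℝ × ℝ | 0 ≤ p.2.2} := fun p hp => le_trans ht₀ hp.2.2.1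
  have hφc : ContinuousOn (fun p : ℝ × ℝ × ℝ => u p.1 p.2.1 p.2.2 + ε * p.2.2) K :=
    (hsmooth.continuousOn.mono hKsub).add
      ((continuous_const.mul (continuous_snd.comp continuous_snd)).continuousOn)
  obtain ⟨⟨q₁, q₂, ts⟩, hqK, hqmin⟩ := hKc.exists_isMinOn hKne hφc
  obtain ⟨hq₁, hq₂, hts⟩ := hqK
  have hmin : ∀ p ∈ K, u q₁ q₂ ts + ε * ts ≤ u p.1 p.2.1 p.2.2 + ε * p.2.2 :=
    fun p hp => hqmin hp
  have hts0 : ts = t₀ := by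
    by_contra hne
    have hlt : t₀ < ts := lt_of_le_of_ne hts.1 (Ne.symm hne)
    have htsp : 0 < ts := lt_of_le_of_lt ht₀ hlt
    have hmin1 : ∀ a, u q₁ q₂ ts ≤ u a q₂ ts := by
      intro a
      have pp : Function.Periodic (fun a => u a q₂ ts) (2*π) := fun a => (hper a q₂ ts).1
      obtain ⟨y, hy, hxy⟩ := pp.exists_mem_Ico₀ Real.two_pi_pos a
      have hxy' : u a q₂ ts = u y q₂ ts := hxy
      have h := hmin (y, q₂, ts) ⟨Ico_subset_Icc_self hy, hq₂, hts⟩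
      rw [hxy']; linarith
    have hmin2 : ∀ b, u q₁ q₂ ts ≤ u q₁ b ts := by
      intro b
      have pp : Function.Periodic (fun b => u q₁ b ts) (2*π) := fun b => (hper q₁ b ts).2
      obtain ⟨y, hy, hxy⟩ := pp.exists_mem_Ico₀ Real.two_pi_pos b
      have hxy' : u q₁ b ts = u q₁ y ts := hxy
      have h := hmin (q₁, y, ts) ⟨hq₁, Ico_subset_Icc_self hy, hts⟩
      rw [hxy']; linarith
    have hd1 : 0 ≤ deriv (deriv fun a => u a q₂ ts) q₁ :=
      sdt_min (slice1 hsmooth q₂ ts htsp) hmin1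
    have hd2 : 0 ≤ deriv (deriv fun b => u q₁ b ts) q₂ :=
      sdt_min (slice2 hsmooth q₁ ts htsp) hmin2
    have hdiff := slice3 hsmooth q₁ q₂ ts htsp
    have hderiv_eq : derivWithin (fun s => u q₁ q₂ s) (Ici (0:ℝ)) ts
        = deriv (fun s => u q₁ q₂ s) ts := derivWithin_of_mem_nhds (Ici_mem_nhds htsp)
    have hge : 0 ≤ deriv (fun s => u q₁ q₂ s) ts := by
      rw [← hderiv_eq, hsol q₁ q₂ ts (le_of_lt htsp)]
      have hA : (0:ℝ) ≤ (l₁ + ts) * (u q₁ q₂ ts) ^ 2 :=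
        mul_nonneg (by linarith) (sq_nonneg _)
      apply mul_nonneg hA
      have c1 : (0:ℝ) ≤ ((l₁ + ts) ^ 2)⁻¹ := inv_nonneg.mpr (sq_nonneg _)
      have c2 : (0:ℝ) ≤ ((l : ℝ) ^ 2)⁻¹ := inv_nonneg.mpr (sq_nonneg _)
      exact add_nonneg (mul_nonneg c1 hd1) (mul_nonneg c2 hd2)
    have hf : HasDerivAt (fun s => u q₁ q₂ s + ε * s)
        (deriv (fun s => u q₁ q₂ s) ts + ε) ts := by
      have h1 := hdiff.hasDerivAt
      have h2 : HasDerivAt (fun s : ℝ => ε * s) ε ts := by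
        simpa using (hasDerivAt_id ts).const_mul ε
      exact h1.add h2
    have h0 : deriv (fun s => u q₁ q₂ s) ts + ε ≤ 0 := by
      apply right_min_deriv_nonpos hlt hf
      intro s hs1 hs2
      exact hmin (q₁, q₂, s) ⟨hq₁, hq₂, hs1, le_trans hs2 hts.2⟩
    linarith
  subst hts0
  refine ⟨q₁, q₂, hq₁, hq₂, ?_⟩
  intro x y
  obtain ⟨a, ha, b, hb, hxy⟩ := reduce_per hper x y t₁
  rw [hxy]
  exact hmin (a, b, t₁) ⟨ha, hb, h01, le_refl t₁⟩

theorem stmt6 (l₁ l : ℝ) (hl₁ : 0 < l₁) (hl : 0 < l)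
    (u : ℝ → ℝ → ℝ → ℝ)
    (hsmooth : SmoothOnHalf u)
    (hpos : ∀ θ₁ θ₂ t : ℝ, 0 ≤ t → 0 < u θ₁ θ₂ t)
    (hper : Periodic2 u)
    (hsol : QuasiSphericalSol l₁ l u) :
    AntitoneOn (fun t => ⨆ p : ℝ × ℝ, u p.1 p.2 t) (Ici (0 : ℝ)) ∧
      MonotoneOn (fun t => ⨅ p : ℝ × ℝ, u p.1 p.2 t) (Ici (0 : ℝ)) := by
  constructor
  · intro t₀ ht₀ t₁ ht₁ h01
    simp only
    apply ciSup_le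
    rintro ⟨x, y⟩
    obtain ⟨r₁, r₂, _, _, hr⟩ :=
      core_max hl₁ hl hsmooth hpos hper hsol ht₀ (le_refl t₀) one_pos
    have hbdd : BddAbove (Set.range fun p : ℝ × ℝ => u p.1 p.2 t₀) := by
      refine ⟨u r₁ r₂ t₀, ?_⟩
      rintro _ ⟨⟨x', y'⟩, rfl⟩
      have := hr x' y'
      simp only
      linarith
    have key : ∀ δ : ℝ, 0 < δ → u x y t₁ ≤ (⨆ p : ℝ × ℝ, u p.1 p.2 t₀) + δ := by
      intro δ hδ
      have hεpos : 0 < δ / (t₁ - t₀ + 1) := div_pos hδ (by linarith)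
      obtain ⟨q₁, q₂, _, _, hq⟩ :=
        core_max hl₁ hl hsmooth hpos hper hsol ht₀ h01 hεpos
      have h1 : u x y t₁ ≤ u q₁ q₂ t₀ + (δ / (t₁ - t₀ + 1)) * (t₁ - t₀) := by
        have := hq x y; linarith
      have h2 : u q₁ q₂ t₀ ≤ ⨆ p : ℝ × ℝ, u p.1 p.2 t₀ := le_ciSup hbdd (q₁, q₂)
      have h3 : (δ / (t₁ - t₀ + 1)) * (t₁ - t₀) ≤ δ := by
        rw [div_mul_eq_mul_div, div_le_iff₀ (by linarith)]
        nlinarith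
      linarith
    by_contra hc
    push_neg at hc
    have := key ((u x y t₁ - ⨆ p : ℝ × ℝ, u p.1 p.2 t₀) / 2) (by linarith)
    linarith
  · intro t₀ ht₀ t₁ ht₁ h01
    simp only
    apply le_ciInf
    rintro ⟨x, y⟩
    have hbdd : BddBelow (Set.range fun p : ℝ × ℝ => u p.1 p.2 t₀) := by
      refine ⟨0, ?_⟩
      rintro _ ⟨⟨x', y'⟩, rfl⟩
      exact (hpos x' y' t₀ ht₀).le
    have key : ∀ δ : ℝ, 0 < δ → (⨅ p : ℝ × ℝ, u p.1 p.2 t₀) ≤ u x y t₁ + δ := by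
      intro δ hδ
      have hεpos : 0 < δ / (t₁ - t₀ + 1) := div_pos hδ (by linarith)
      obtain ⟨q₁, q₂, _, _, hq⟩ :=
        core_min hl₁ hl hsmooth hpos hper hsol ht₀ h01 hεpos
      have h1 : u q₁ q₂ t₀ ≤ u x y t₁ + (δ / (t₁ - t₀ + 1)) * (t₁ - t₀) := by
        have := hq x y; linarith
      have h2 : (⨅ p : ℝ × ℝ, u p.1 p.2 t₀) ≤ u q₁ q₂ t₀ := ciInf_le hbdd (q₁, q₂)
      have h3 : (δ / (t₁ - t₀ + 1)) * (t₁ - t₀) ≤ δ := by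
        rw [div_mul_eq_mul_div, div_le_iff₀ (by linarith)]
        nlinarith
      linarith
    by_contra hc
    push_neg at hc
    have := key (((⨅ p : ℝ × ℝ, u p.1 p.2 t₀) - u x y t₁) / 2) (by linarith)
    linarith
end

section
/- Fix constants l₁ > 0 and l > 0, and let u : ℝ² × [0,∞) → ℝ be a smooth positive solution of the quasi-spherical equation ∂u/∂t = (l₁+t)·u²·( (l₁+t)⁻² ∂²u/∂θ₁² + l⁻² ∂²u/∂θ₂² ) that is 2π-periodic in the first two variables. Then the quantity ∫_{[0,2π]²} u(θ₁,θ₂,t)⁻¹ dθ₁ dθ₂ is independent of t; equivalently, the total integral of u⁻¹ against the area element of the flat torus 𝕊¹(l₁+t) × 𝕊¹(l), namely (l₁+t)·l·∫_{[0,2π]²} u(·,·,t)⁻¹ dθ₁ dθ₂, equals ((l₁+t)/l₁) times its value at t = 0. -/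
open Real Set

open MeasureTheory

noncomputable section

namespace QS7

def QSH : Set (ℝ × ℝ × ℝ) := {p : ℝ × ℝ × ℝ | 0 ≤ p.2.2}

lemma uniqueDiffOn_QSH : UniqueDiffOn ℝ QSH := by
  apply uniqueDiffOn_convex
  · have : QSH = ((LinearMap.snd ℝ ℝ ℝ).comp (LinearMap.snd ℝ ℝ (ℝ × ℝ))) ⁻¹' (Ici 0) := rfl
    rw [this]
    exact (convex_Ici (0:ℝ)).linear_preimage _
  · refine ⟨(0,0,1), ?_⟩
    have hopen : IsOpen {p : ℝ × ℝ × ℝ | 0 < p.2.2} :=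
      isOpen_lt continuous_const (continuous_snd.comp continuous_snd)
    have h : {p : ℝ × ℝ × ℝ | 0 < p.2.2} ⊆ QSH := fun p hp => show (0:ℝ) ≤ p.2.2 from le_of_lt hp
    exact interior_maximal h hopen (by norm_num : (0:ℝ) < (1:ℝ))

lemma QSH_mem_nhds {p : ℝ × ℝ × ℝ} (hp : 0 < p.2.2) : QSH ∈ nhds p := by
  have hopen : IsOpen {q : ℝ × ℝ × ℝ | 0 < q.2.2} :=
    isOpen_lt continuous_const (continuous_snd.comp continuous_snd)
  exact Filter.mem_of_superset (hopen.mem_nhds hp)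
    (fun q hq => show (0:ℝ) ≤ q.2.2 from le_of_lt hq)

variable {f : ℝ × ℝ × ℝ → ℝ}

lemma sliceX (hf : DifferentiableOn ℝ f QSH) {x y t : ℝ} (ht : 0 ≤ t) :
    HasDerivAt (fun a => f (a, y, t)) (fderivWithin ℝ f QSH (x, y, t) (1, 0, 0)) x := by
  have hφ : HasDerivWithinAt (fun a : ℝ => (a, y, t)) ((1:ℝ), (0:ℝ), (0:ℝ)) univ x :=
    (HasDerivAt.prodMk (hasDerivAt_id x) (hasDerivAt_const x (y, t))).hasDerivWithinAt
  have hL := ((hf (x, y, t) ht).hasFDerivWithinAt).comp_hasDerivWithinAt x hφ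
    (fun a _ => (ht : ((a, y, t) : ℝ × ℝ × ℝ) ∈ QSH))
  rw [hasDerivWithinAt_univ] at hL
  exact hL

lemma sliceY (hf : DifferentiableOn ℝ f QSH) {x y t : ℝ} (ht : 0 ≤ t) :
    HasDerivAt (fun b => f (x, b, t)) (fderivWithin ℝ f QSH (x, y, t) (0, 1, 0)) y := by
  have hφ : HasDerivWithinAt (fun b : ℝ => (x, b, t)) ((0:ℝ), (1:ℝ), (0:ℝ)) univ y :=
    (HasDerivAt.prodMk (hasDerivAt_const y x) (HasDerivAt.prodMk (hasDerivAt_id y) (hasDerivAt_const y t))).hasDerivWithinAt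
  have hL := ((hf (x, y, t) ht).hasFDerivWithinAt).comp_hasDerivWithinAt y hφ
    (fun b _ => (ht : ((x, b, t) : ℝ × ℝ × ℝ) ∈ QSH))
  rw [hasDerivWithinAt_univ] at hL
  exact hL

lemma sliceT (hf : DifferentiableOn ℝ f QSH) {x y t : ℝ} (ht : 0 ≤ t) :
    HasDerivWithinAt (fun s => f (x, y, s)) (fderivWithin ℝ f QSH (x, y, t) (0, 0, 1))
      (Ici (0:ℝ)) t := by
  have hφ : HasDerivWithinAt (fun s : ℝ => (x, y, s)) ((0:ℝ), (0:ℝ), (1:ℝ)) (Ici (0:ℝ)) t :=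
    (HasDerivAt.prodMk (hasDerivAt_const t x) (HasDerivAt.prodMk (hasDerivAt_const t y) (hasDerivAt_id t))).hasDerivWithinAt
  exact ((hf (x, y, t) ht).hasFDerivWithinAt).comp_hasDerivWithinAt t hφ
    (fun s hs => (hs : (0:ℝ) ≤ s))

lemma sliceT_interior (hf : DifferentiableOn ℝ f QSH) {x y t : ℝ} (ht : 0 < t) :
    HasDerivAt (fun s => f (x, y, s)) (fderivWithin ℝ f QSH (x, y, t) (0, 0, 1)) t := by
  have hmem : QSH ∈ nhds ((x, y, t) : ℝ × ℝ × ℝ) := QSH_mem_nhds ht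
  have hd : DifferentiableAt ℝ f (x, y, t) := (hf.differentiableAt hmem)
  have heq : fderivWithin ℝ f QSH (x, y, t) = fderiv ℝ f (x, y, t) :=
    fderivWithin_of_mem_nhds hmem
  rw [heq]
  have hφ : HasDerivAt (fun s : ℝ => (x, y, s)) ((0:ℝ), (0:ℝ), (1:ℝ)) t :=
    HasDerivAt.prodMk (hasDerivAt_const t x) (HasDerivAt.prodMk (hasDerivAt_const t y) (hasDerivAt_id t))
  exact hd.hasFDerivAt.comp_hasDerivAt t hφ

lemma periodic_deriv {h : ℝ → ℝ} {c : ℝ} (hp : Function.Periodic h c) :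
    Function.Periodic (deriv h) c := by
  intro x
  have h1 : (fun y => h (y + c)) = h := funext fun y => hp y
  rw [← deriv_comp_add_const h c x, h1]

/-- Directional `fderivWithin` on the half space. -/
def Dv (v : ℝ × ℝ × ℝ) (F : ℝ × ℝ × ℝ → ℝ) : ℝ × ℝ × ℝ → ℝ :=
  fun p => fderivWithin ℝ F QSH p v

lemma contDiffOn_Dv {F : ℝ × ℝ × ℝ → ℝ} (hF : ContDiffOn ℝ (⊤ : ℕ∞) F QSH) (v : ℝ × ℝ × ℝ) :
    ContDiffOn ℝ (⊤ : ℕ∞) (Dv v F) QSH :=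
  (hF.fderivWithin uniqueDiffOn_QSH (by simp)).clm_apply contDiffOn_const

lemma deriv2x_eq {F : ℝ × ℝ × ℝ → ℝ} (hF : ContDiffOn ℝ (⊤ : ℕ∞) F QSH) {x y t : ℝ}
    (ht : 0 ≤ t) :
    deriv (deriv (fun a => F (a, y, t))) x = Dv (1,0,0) (Dv (1,0,0) F) (x, y, t) := by
  have h1 : deriv (fun a => F (a, y, t)) = fun a => Dv (1,0,0) F (a, y, t) :=
    funext fun a => (sliceX (hF.differentiableOn (by simp)) ht).deriv
  rw [h1]
  exact (sliceX ((contDiffOn_Dv hF _).differentiableOn (by simp)) ht).deriv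

lemma deriv2y_eq {F : ℝ × ℝ × ℝ → ℝ} (hF : ContDiffOn ℝ (⊤ : ℕ∞) F QSH) {x y t : ℝ}
    (ht : 0 ≤ t) :
    deriv (deriv (fun b => F (x, b, t))) y = Dv (0,1,0) (Dv (0,1,0) F) (x, y, t) := by
  have h1 : deriv (fun b => F (x, b, t)) = fun b => Dv (0,1,0) F (x, b, t) :=
    funext fun b => (sliceY (hF.differentiableOn (by simp)) ht).deriv
  rw [h1]
  exact (sliceY ((contDiffOn_Dv hF _).differentiableOn (by simp)) ht).deriv

lemma derivWithinT_eq {F : ℝ × ℝ × ℝ → ℝ} (hF : ContDiffOn ℝ (⊤ : ℕ∞) F QSH) {x y t : ℝ}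
    (ht : 0 ≤ t) :
    derivWithin (fun s => F (x, y, s)) (Ici (0:ℝ)) t = Dv (0,0,1) F (x, y, t) :=
  (sliceT (hF.differentiableOn (by simp)) ht).derivWithin (uniqueDiffOn_Ici 0 t ht)

lemma integral_V1_zero {F : ℝ × ℝ × ℝ → ℝ} (hF : ContDiffOn ℝ (⊤ : ℕ∞) F QSH)
    (hperx : ∀ a y s : ℝ, F (a + 2 * π, y, s) = F (a, y, s)) {y t : ℝ} (ht : 0 ≤ t) :
    ∫ x in (0:ℝ)..(2 * π), Dv (1,0,0) (Dv (1,0,0) F) (x, y, t) = 0 := by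
  have hder : ∀ a : ℝ, HasDerivAt (fun a' => Dv (1,0,0) F (a', y, t))
      (Dv (1,0,0) (Dv (1,0,0) F) (a, y, t)) a :=
    fun a => sliceX ((contDiffOn_Dv hF _).differentiableOn (by simp)) ht
  have hderiv_h₁ : deriv (fun a => Dv (1,0,0) F (a, y, t))
      = fun a => Dv (1,0,0) (Dv (1,0,0) F) (a, y, t) := funext fun a => (hder a).deriv
  have hcont : Continuous fun a => Dv (1,0,0) (Dv (1,0,0) F) (a, y, t) := by
    have hc : ContinuousOn (Dv (1,0,0) (Dv (1,0,0) F)) QSH :=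
      (contDiffOn_Dv (contDiffOn_Dv hF _) _).continuousOn
    exact hc.comp_continuous (by fun_prop) (fun a => (ht : ((a,y,t):ℝ×ℝ×ℝ) ∈ QSH))
  rw [← hderiv_h₁]
  rw [intervalIntegral.integral_deriv_eq_sub (fun a _ => (hder a).differentiableAt)
    (by rw [hderiv_h₁]; exact hcont.intervalIntegrable _ _)]
  have hp : Function.Periodic (fun a => F (a, y, t)) (2 * π) := fun a => hperx a y t
  have hpd := periodic_deriv hp 0
  have he : deriv (fun a => F (a, y, t)) = fun a => Dv (1,0,0) F (a, y, t) :=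
    funext fun a => (sliceX (hF.differentiableOn (by simp)) ht).deriv
  rw [he, zero_add] at hpd
  exact sub_eq_zero.mpr (by simpa using hpd)

lemma integral_V2_zero {F : ℝ × ℝ × ℝ → ℝ} (hF : ContDiffOn ℝ (⊤ : ℕ∞) F QSH)
    (hpery : ∀ x b s : ℝ, F (x, b + 2 * π, s) = F (x, b, s)) {x t : ℝ} (ht : 0 ≤ t) :
    ∫ y in (0:ℝ)..(2 * π), Dv (0,1,0) (Dv (0,1,0) F) (x, y, t) = 0 := by
  have hder : ∀ b : ℝ, HasDerivAt (fun b' => Dv (0,1,0) F (x, b', t))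
      (Dv (0,1,0) (Dv (0,1,0) F) (x, b, t)) b :=
    fun b => sliceY ((contDiffOn_Dv hF _).differentiableOn (by simp)) ht
  have hderiv_h₁ : deriv (fun b => Dv (0,1,0) F (x, b, t))
      = fun b => Dv (0,1,0) (Dv (0,1,0) F) (x, b, t) := funext fun b => (hder b).deriv
  have hcont : Continuous fun b => Dv (0,1,0) (Dv (0,1,0) F) (x, b, t) := by
    have hc : ContinuousOn (Dv (0,1,0) (Dv (0,1,0) F)) QSH :=
      (contDiffOn_Dv (contDiffOn_Dv hF _) _).continuousOn
    exact hc.comp_continuous (by fun_prop) (fun b => (ht : ((x,b,t):ℝ×ℝ×ℝ) ∈ QSH))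
  rw [← hderiv_h₁]
  rw [intervalIntegral.integral_deriv_eq_sub (fun b _ => (hder b).differentiableAt)
    (by rw [hderiv_h₁]; exact hcont.intervalIntegrable _ _)]
  have hp : Function.Periodic (fun b => F (x, b, t)) (2 * π) := fun b => hpery x b t
  have hpd := periodic_deriv hp 0
  have he : deriv (fun b => F (x, b, t)) = fun b => Dv (0,1,0) F (x, b, t) :=
    funext fun b => (sliceY (hF.differentiableOn (by simp)) ht).deriv
  rw [he, zero_add] at hpd
  exact sub_eq_zero.mpr (by simpa using hpd)

lemma swapII {f : ℝ → ℝ → ℝ} (hf : Continuous (Function.uncurry f)) {a b c d : ℝ}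
    (hab : a ≤ b) (hcd : c ≤ d) :
    ∫ x in a..b, ∫ y in c..d, f x y = ∫ y in c..d, ∫ x in a..b, f x y := by
  simp only [intervalIntegral.integral_of_le hab, intervalIntegral.integral_of_le hcd]
  apply MeasureTheory.integral_integral_swap
  have h1 : IntegrableOn (Function.uncurry f) (Ioc a b ×ˢ Ioc c d) volume :=
    ((hf.continuousOn.integrableOn_compact (isCompact_Icc.prod isCompact_Icc)).mono_set
      (Set.prod_mono Ioc_subset_Icc_self Ioc_subset_Icc_self))
  rw [Measure.prod_restrict]
  rw [Measure.volume_eq_prod] at h1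
  exact h1

theorem keyQS (l₁ l : ℝ) (hl₁ : 0 < l₁) (hl : 0 < l)
    (u : ℝ → ℝ → ℝ → ℝ)
    (hsmooth : ContDiffOn ℝ (⊤ : ℕ∞) (fun p : ℝ × ℝ × ℝ => u p.1 p.2.1 p.2.2)
      {p : ℝ × ℝ × ℝ | 0 ≤ p.2.2})
    (hpos : ∀ θ₁ θ₂ t : ℝ, 0 ≤ t → 0 < u θ₁ θ₂ t)
    (hper : ∀ θ₁ θ₂ t : ℝ, u (θ₁ + 2 * π) θ₂ t = u θ₁ θ₂ t ∧ u θ₁ (θ₂ + 2 * π) t = u θ₁ θ₂ t)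
    (hsol : ∀ θ₁ θ₂ t : ℝ, 0 ≤ t →
      derivWithin (fun s => u θ₁ θ₂ s) (Ici (0 : ℝ)) t =
        (l₁ + t) * (u θ₁ θ₂ t) ^ 2 *
          (((l₁ + t) ^ 2)⁻¹ * deriv (deriv fun a => u a θ₂ t) θ₁ +
            (l ^ 2)⁻¹ * deriv (deriv fun b => u θ₁ b t) θ₂)) :
    ∀ t : ℝ, 0 ≤ t →
      (∫ x in (0:ℝ)..(2 * π), ∫ y in (0:ℝ)..(2 * π), (u x y t)⁻¹) =
        (∫ x in (0:ℝ)..(2 * π), ∫ y in (0:ℝ)..(2 * π), (u x y 0)⁻¹) := by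
  intro t ht
  have h2π : (0:ℝ) ≤ 2 * π := by positivity
  set U : ℝ × ℝ × ℝ → ℝ := fun p => u p.1 p.2.1 p.2.2 with hUdef
  have hU : ContDiffOn ℝ (⊤ : ℕ∞) U QSH := hsmooth
  have hUd : DifferentiableOn ℝ U QSH := hU.differentiableOn (by simp)
  set V1 : ℝ × ℝ × ℝ → ℝ := Dv (1,0,0) (Dv (1,0,0) U) with hV1def
  set V2 : ℝ × ℝ × ℝ → ℝ := Dv (0,1,0) (Dv (0,1,0) U) with hV2def
  set W : ℝ × ℝ × ℝ → ℝ := Dv (0,0,1) U with hWdef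
  have hV1cont : ContinuousOn V1 QSH := (contDiffOn_Dv (contDiffOn_Dv hU _) _).continuousOn
  have hV2cont : ContinuousOn V2 QSH := (contDiffOn_Dv (contDiffOn_Dv hU _) _).continuousOn
  -- the function g = -(l₁+s)((l₁+s)⁻² V1 + l⁻² V2), whose double space integral vanishes
  set g : ℝ × ℝ × ℝ → ℝ :=
    fun p => -((l₁ + p.2.2) * (((l₁ + p.2.2) ^ 2)⁻¹ * V1 p + (l ^ 2)⁻¹ * V2 p)) with hgdef
  have hgcont : ContinuousOn g QSH := by
    apply ContinuousOn.neg
    apply ContinuousOn.mul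
    · exact (continuous_const.add (continuous_snd.comp continuous_snd)).continuousOn
    · apply ContinuousOn.add
      · refine ContinuousOn.mul (ContinuousOn.inv₀ ?_ ?_) hV1cont
        · exact ((continuous_const.add (continuous_snd.comp continuous_snd)).pow 2).continuousOn
        · intro p hp
          have : 0 < l₁ + p.2.2 := by
            have : (0:ℝ) ≤ p.2.2 := hp
            linarith
          positivity
      · exact continuousOn_const.mul hV2cont
  -- clamped, globally continuous version of g
  set G : ℝ × ℝ × ℝ → ℝ := fun p => g (p.1, p.2.1, max p.2.2 0) with hGdef
  have hGcont : Continuous G := by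
    apply hgcont.comp_continuous (by fun_prop)
    intro p
    exact (le_max_right _ _ : (0:ℝ) ≤ max p.2.2 0)
  have hGg : ∀ x y s : ℝ, 0 ≤ s → G (x, y, s) = g (x, y, s) := by
    intro x y s hs
    simp only [hGdef]
    rw [max_eq_left hs]
  -- PDE in terms of W, V1, V2
  have hW_eq : ∀ x y s : ℝ, 0 ≤ s → W (x, y, s) =
      (l₁ + s) * (u x y s) ^ 2 *
        (((l₁ + s) ^ 2)⁻¹ * V1 (x, y, s) + (l ^ 2)⁻¹ * V2 (x, y, s)) := by
    intro x y s hs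
    have h0 := hsol x y s hs
    have hdW : derivWithin (fun s' => u x y s') (Ici (0:ℝ)) s = W (x, y, s) :=
      derivWithinT_eq hU hs
    have h1 : deriv (deriv fun a => u a y s) x = V1 (x, y, s) := deriv2x_eq hU hs
    have h2 : deriv (deriv fun b => u x b s) y = V2 (x, y, s) := deriv2y_eq hU hs
    rw [hdW, h1, h2] at h0
    exact h0
  -- FTC in the time variable
  have hFTC : ∀ x y : ℝ, (u x y t)⁻¹ = (u x y 0)⁻¹ + ∫ s in (0:ℝ)..t, G (x, y, s) := by
    intro x y
    have hint : ∫ s in (0:ℝ)..t, G (x, y, s) = (u x y t)⁻¹ - (u x y 0)⁻¹ := by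
      apply intervalIntegral.integral_eq_sub_of_hasDeriv_right_of_le ht
      · have hcs : ContinuousOn (fun s => u x y s) (Ici (0:ℝ)) := by
          have hφ : Continuous (fun s : ℝ => ((x, y, s) : ℝ × ℝ × ℝ)) := by fun_prop
          exact hU.continuousOn.comp hφ.continuousOn (fun s hs => (hs : (0:ℝ) ≤ s))
        exact (hcs.mono Icc_subset_Ici_self).inv₀ fun s hs => (hpos x y s hs.1).ne'
      · intro s hs
        have hu : HasDerivAt (fun s' => u x y s') (W (x, y, s)) s := sliceT_interior hUd hs.1
        have hne : u x y s ≠ 0 := (hpos x y s hs.1.le).ne'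
        have hinv := hu.inv hne
        have heq : -W (x, y, s) / (u x y s) ^ 2 = G (x, y, s) := by
          rw [hGg x y s hs.1.le, hW_eq x y s hs.1.le, hgdef]
          field_simp
        rw [heq] at hinv
        exact hinv.hasDerivWithinAt
      · exact (hGcont.comp
          (by fun_prop : Continuous fun s : ℝ => ((x, y, s) : ℝ × ℝ × ℝ))).intervalIntegrable _ _
    rw [hint]
    ring
  -- vanishing of the double space integral of g at nonnegative times
  have hzz : ∀ s : ℝ, 0 ≤ s →
      (∫ x in (0:ℝ)..(2 * π), ∫ y in (0:ℝ)..(2 * π), g (x, y, s)) = 0 := by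
    intro s hs
    have hiV1 : ∀ y : ℝ, ∫ x in (0:ℝ)..(2 * π), V1 (x, y, s) = 0 := fun y =>
      integral_V1_zero hU (fun a b c => (hper a b c).1) hs
    have hiV2 : ∀ x : ℝ, ∫ y in (0:ℝ)..(2 * π), V2 (x, y, s) = 0 := fun x =>
      integral_V2_zero hU (fun a b c => (hper a b c).2) hs
    set c₁ : ℝ := -((l₁ + s) * ((l₁ + s) ^ 2)⁻¹) with hc₁
    set c₂ : ℝ := -((l₁ + s) * (l ^ 2)⁻¹) with hc₂
    have hgxy : ∀ x y : ℝ, g (x, y, s) = c₁ * V1 (x, y, s) + c₂ * V2 (x, y, s) := by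
      intro x y
      simp only [hgdef, hc₁, hc₂]
      ring
    have hV1slice : ∀ y : ℝ, Continuous fun x => V1 (x, y, s) := fun y =>
      hV1cont.comp_continuous (by fun_prop) (fun x => (hs : ((x,y,s):ℝ×ℝ×ℝ) ∈ QSH))
    have hV1slice' : ∀ x : ℝ, Continuous fun y => V1 (x, y, s) := fun x =>
      hV1cont.comp_continuous (by fun_prop) (fun y => (hs : ((x,y,s):ℝ×ℝ×ℝ) ∈ QSH))
    have hV2slice' : ∀ x : ℝ, Continuous fun y => V2 (x, y, s) := fun x =>
      hV2cont.comp_continuous (by fun_prop) (fun y => (hs : ((x,y,s):ℝ×ℝ×ℝ) ∈ QSH))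
    have inner : ∀ x : ℝ, ∫ y in (0:ℝ)..(2 * π), g (x, y, s)
        = c₁ * ∫ y in (0:ℝ)..(2 * π), V1 (x, y, s) := by
      intro x
      rw [intervalIntegral.integral_congr (g := fun y => c₁ * V1 (x, y, s) + c₂ * V2 (x, y, s))
        (fun y _ => hgxy x y)]
      rw [intervalIntegral.integral_add
        (((hV1slice' x).intervalIntegrable _ _).const_mul c₁)
        (((hV2slice' x).intervalIntegrable _ _).const_mul c₂),
        intervalIntegral.integral_const_mul, intervalIntegral.integral_const_mul,
        hiV2 x, mul_zero, add_zero]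
    rw [intervalIntegral.integral_congr (fun x _ => inner x),
      intervalIntegral.integral_const_mul]
    have hswap : (∫ x in (0:ℝ)..(2 * π), ∫ y in (0:ℝ)..(2 * π), V1 (x, y, s))
        = ∫ y in (0:ℝ)..(2 * π), ∫ x in (0:ℝ)..(2 * π), V1 (x, y, s) := by
      apply swapII _ h2π h2π
      exact hV1cont.comp_continuous (by fun_prop)
        (fun q => (hs : ((q.1, q.2, s) : ℝ×ℝ×ℝ) ∈ QSH))
    rw [hswap]
    have : (∫ y in (0:ℝ)..(2 * π), ∫ x in (0:ℝ)..(2 * π), V1 (x, y, s))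
        = ∫ y in (0:ℝ)..(2 * π), (0:ℝ) :=
      intervalIntegral.integral_congr (fun y _ => hiV1 y)
    rw [this]
    simp
  have hzzG : ∀ s : ℝ, (∫ x in (0:ℝ)..(2 * π), ∫ y in (0:ℝ)..(2 * π), G (x, y, s)) = 0 := by
    intro s
    have hGs : ∀ x y : ℝ, G (x, y, s) = g (x, y, max s 0) := fun x y => rfl
    calc (∫ x in (0:ℝ)..(2 * π), ∫ y in (0:ℝ)..(2 * π), G (x, y, s))
        = ∫ x in (0:ℝ)..(2 * π), ∫ y in (0:ℝ)..(2 * π), g (x, y, max s 0) := by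
          exact intervalIntegral.integral_congr (fun x _ =>
            intervalIntegral.integral_congr (fun y _ => hGs x y))
      _ = 0 := hzz (max s 0) (le_max_right _ _)
  -- continuity helpers for parametric integrals
  have hu0cont : Continuous (Function.uncurry fun x y => (u x y 0)⁻¹) := by
    have hbase : Continuous fun q : ℝ × ℝ => u q.1 q.2 0 := by
      have h := hU.continuousOn.comp_continuous
        (f := fun q : ℝ × ℝ => ((q.1, q.2, (0:ℝ)) : ℝ × ℝ × ℝ)) (by fun_prop)
        (fun q => show (0:ℝ) ≤ (0:ℝ) from le_rfl)
      exact h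
    exact hbase.inv₀ fun q => (hpos q.1 q.2 0 le_rfl).ne'
  have hGyscont : ∀ x : ℝ, Continuous (Function.uncurry fun y s => G (x, y, s)) :=
    fun x => hGcont.comp (by fun_prop)
  have hGint : Continuous (Function.uncurry fun x y => ∫ s in (0:ℝ)..t, G (x, y, s)) := by
    apply intervalIntegral.continuous_parametric_intervalIntegral_of_continuous'
      (f := fun q : ℝ × ℝ => fun s => G (q.1, q.2, s))
    exact hGcont.comp (by fun_prop)
  -- assemble
  have hIy : ∀ x : ℝ, (∫ y in (0:ℝ)..(2 * π), (u x y t)⁻¹)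
      = (∫ y in (0:ℝ)..(2 * π), (u x y 0)⁻¹)
        + ∫ y in (0:ℝ)..(2 * π), ∫ s in (0:ℝ)..t, G (x, y, s) := by
    intro x
    rw [intervalIntegral.integral_congr (fun y _ => hFTC x y)]
    apply intervalIntegral.integral_add
    · exact (hu0cont.comp (by fun_prop : Continuous fun y : ℝ =>
        ((x, y) : ℝ × ℝ))).intervalIntegrable _ _
    · exact (hGint.comp (by fun_prop : Continuous fun y : ℝ =>
        ((x, y) : ℝ × ℝ))).intervalIntegrable _ _
  rw [intervalIntegral.integral_congr (fun x _ => hIy x)]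
  rw [intervalIntegral.integral_add]
  · -- reduces to showing the triple integral vanishes
    have htriple : (∫ x in (0:ℝ)..(2 * π), ∫ y in (0:ℝ)..(2 * π),
        ∫ s in (0:ℝ)..t, G (x, y, s)) = 0 := by
      have hswap1 : ∀ x : ℝ, (∫ y in (0:ℝ)..(2 * π), ∫ s in (0:ℝ)..t, G (x, y, s))
          = ∫ s in (0:ℝ)..t, ∫ y in (0:ℝ)..(2 * π), G (x, y, s) :=
        fun x => swapII (hGyscont x) h2π ht
      rw [intervalIntegral.integral_congr (fun x _ => hswap1 x)]
      have hinnercont : Continuous (Function.uncurry fun x s =>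
          ∫ y in (0:ℝ)..(2 * π), G (x, y, s)) := by
        apply intervalIntegral.continuous_parametric_intervalIntegral_of_continuous'
          (f := fun q : ℝ × ℝ => fun y => G (q.1, y, q.2))
        exact hGcont.comp (by fun_prop)
      rw [swapII hinnercont h2π ht]
      have : (∫ s in (0:ℝ)..t, ∫ x in (0:ℝ)..(2 * π), ∫ y in (0:ℝ)..(2 * π), G (x, y, s))
          = ∫ s in (0:ℝ)..t, (0:ℝ) :=
        intervalIntegral.integral_congr (fun s _ => hzzG s)
      rw [this]
      simp
    rw [htriple, add_zero]
  · exact (intervalIntegral.continuous_parametric_intervalIntegral_of_continuous'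
      (f := fun x : ℝ => fun y => (u x y 0)⁻¹) hu0cont 0 (2 * π)).intervalIntegrable _ _
  · exact (intervalIntegral.continuous_parametric_intervalIntegral_of_continuous'
      (f := fun x : ℝ => fun y => ∫ s in (0:ℝ)..t, G (x, y, s)) hGint 0
      (2 * π)).intervalIntegrable _ _
end QS7


end

open QS7 in
theorem stmt7 (l₁ l : ℝ) (hl₁ : 0 < l₁) (hl : 0 < l)
    (u : ℝ → ℝ → ℝ → ℝ)
    (hsmooth : SmoothOnHalf u)
    (hpos : ∀ θ₁ θ₂ t : ℝ, 0 ≤ t → 0 < u θ₁ θ₂ t)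
    (hper : Periodic2 u)
    (hsol : QuasiSphericalSol l₁ l u) :
    ∀ t : ℝ, 0 ≤ t →
      (∫ x in (0:ℝ)..(2 * π), ∫ y in (0:ℝ)..(2 * π), (u x y t)⁻¹) =
        (∫ x in (0:ℝ)..(2 * π), ∫ y in (0:ℝ)..(2 * π), (u x y 0)⁻¹) ∧
      (l₁ + t) * l * (∫ x in (0:ℝ)..(2 * π), ∫ y in (0:ℝ)..(2 * π), (u x y t)⁻¹) =
        ((l₁ + t) / l₁) *
          (l₁ * l * ∫ x in (0:ℝ)..(2 * π), ∫ y in (0:ℝ)..(2 * π), (u x y 0)⁻¹) := by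
  intro t ht
  have key := QS7.keyQS l₁ l hl₁ hl u hsmooth hpos (fun a b c => hper a b c) hsol
  constructor
  · exact key t ht
  · rw [key t ht]
    field_simp
end
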